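/- Let g be a Borel measurable map from a complete metric space M₁ to a separable metric space M₂. Then there exists a meagre (first category) set F ⊆ M₁ such that the restriction of g to M₁ \ F is continuous. -/
import Mathlib

open Topology Set Filter TopologicalSpace

/-- A Borel measurable map `g` from a complete metric space `M₁`
to a separable metric space `M₂` is continuous off a meagre (first category) set:
there is a meagre set `F ⊆ M₁` such that the restriction of `g` to `M₁ \ F`
is continuous. -/
theorem borel_map_continuous_off_meagre
    {M₁ M₂ : Type*} [MetricSpace M₁] [CompleteSpace M₁]
    [MeasurableSpace M₁] [BorelSpace M₁]
    [MetricSpace M₂] [TopologicalSpace.SeparableSpace M₂]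
    [MeasurableSpace M₂] [BorelSpace M₂]
    (g : M₁ → M₂) (hg : Measurable g) :
    ∃ F : Set M₁, IsMeagre F ∧ Continuous (Fᶜ.restrict g) := by
  haveI : SecondCountableTopology M₂ := UniformSpace.secondCountable_of_separable M₂
  obtain ⟨b, hbc, -, hb⟩ := TopologicalSpace.exists_countable_basis M₂
  -- for each basic open set s, the Borel set g ⁻¹' s differs from an open set by a meagre set
  have key : ∀ s ∈ b, ∃ u : Set M₁, IsOpen u ∧ (g ⁻¹' s) =ᵇ u := by
    intro s hs
    exact ((hb.isOpen hs).measurableSet.preimage hg).residualEq_isOpen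
  choose! u hu hgu using key
  -- the exceptional set
  set F : Set M₁ := ⋃ s ∈ b, {x | x ∈ g ⁻¹' s ↔ x ∈ u s}ᶜ with hF
  have hFm : IsMeagre F := by
    rw [IsMeagre, hF, compl_iUnion₂]
    refine (countable_bInter_mem (l := residual M₁) hbc).mpr fun s hs => ?_
    rw [compl_compl]
    filter_upwards [hgu s hs] with x hx
    simp only [eq_iff_iff] at hx
    exact hx
  refine ⟨F, hFm, ?_⟩
  rw [hb.continuous_iff]
  intro s hs
  have : Fᶜ.restrict g ⁻¹' s = Subtype.val ⁻¹' (u s) := by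
    ext ⟨x, hx⟩
    have hxF : x ∉ F := hx
    have : x ∈ g ⁻¹' s ↔ x ∈ u s := by
      by_contra h
      exact hxF (mem_biUnion hs h)
    simpa [Set.restrict] using this
  rw [this]
  exact (hu s hs).preimage continuous_subtype_val
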